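/- (Sufficient decrease, Lemma 3.1.) In the block composite setting, fix x ∈ E, a block index i, and β > 0. Let C ⊆ E be a convex set containing x and x₊, and suppose ∇_i f is L^f_i-Lipschitz on C and ∇_i F is L^F_i-Lipschitz on C (operator norm), with L^F_i > 0 and β > L^f_i. Assume β ≥ L^f_i + L^F_i √(2 L_h) √(φ(x) − φ^*). Let s₊ be a global minimizer over ℝ^{n_i} of q_β(s) = φ̄^i(s;x) + (β/2)‖s − x^i‖² and set x₊ = x[i↦s₊]. Then φ(x₊) ≤ φ(x) − (β/2)‖x₊ − x‖². -/

import Mathlib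

open scoped RealInnerProductSpace

open Set

set_option maxHeartbeats 1000000

/-- Descent lemma along a segment. -/
lemma descent_seg {H : Type*} [NormedAddCommGroup H] [InnerProductSpace ℝ H] [CompleteSpace H]
    (φ : H → ℝ) (G : H → H) (a v : H) (L : ℝ)
    (hG : ∀ t ∈ Icc (0:ℝ) 1, HasGradientAt φ (G (a + t • v)) (a + t • v))
    (hLip : ∀ t ∈ Icc (0:ℝ) 1, ‖G (a + t • v) - G a‖ ≤ L * (t * ‖v‖)) :
    φ (a + v) ≤ φ a + ⟪G a, v⟫ + L / 2 * ‖v‖ ^ 2 := by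
  set ψ : ℝ → ℝ := fun t => φ (a + t • v) - t * ⟪G a, v⟫ - L * ‖v‖ ^ 2 * t ^ 2 / 2 with hψ
  have hD : ∀ t ∈ Icc (0:ℝ) 1, HasDerivAt ψ
      (⟪G (a + t • v), v⟫ - ⟪G a, v⟫ - L * ‖v‖ ^ 2 * t) t := by
    intro t ht
    have h1 : HasDerivAt (fun t : ℝ => a + t • v) v t := by
      simpa using ((hasDerivAt_id t).smul_const v).const_add a
    have h2 : HasDerivAt (fun t : ℝ => φ (a + t • v)) ⟪G (a + t • v), v⟫ t := by
      have := ((hG t ht).hasFDerivAt).comp_hasDerivAt t h1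
      simpa [InnerProductSpace.toDual_apply_apply, Function.comp_def] using this
    have h3 : HasDerivAt (fun t : ℝ => t * ⟪G a, v⟫) ⟪G a, v⟫ t := by
      simpa using (hasDerivAt_id t).mul_const (⟪G a, v⟫)
    have h4 : HasDerivAt (fun t : ℝ => L * ‖v‖ ^ 2 * t ^ 2 / 2) (L * ‖v‖ ^ 2 * t) t := by
      have := ((hasDerivAt_pow 2 t).const_mul (L * ‖v‖ ^ 2)).div_const 2
      exact this.congr_deriv (by ring)
    simpa [hψ, Pi.sub_def] using (h2.sub h3).sub h4
  have hanti : AntitoneOn ψ (Icc (0:ℝ) 1) := by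
    apply antitoneOn_of_deriv_nonpos (convex_Icc 0 1)
    · intro t ht; exact (hD t ht).continuousAt.continuousWithinAt
    · intro t ht
      exact ((hD t (interior_subset ht)).differentiableAt).differentiableWithinAt
    · intro t ht
      rw [(hD t (interior_subset ht)).deriv]
      have ht' : t ∈ Icc (0:ℝ) 1 := interior_subset ht
      have h5 : ⟪G (a + t • v), v⟫ - ⟪G a, v⟫ ≤ L * ‖v‖ ^ 2 * t := by
        have := real_inner_le_norm (G (a + t • v) - G a) v
        have h6 := hLip t ht'
        rw [inner_sub_left] at this
        nlinarith [norm_nonneg v, norm_nonneg (G (a + t • v) - G a)]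
      linarith
  have key := hanti (left_mem_Icc.2 zero_le_one) (right_mem_Icc.2 zero_le_one) zero_le_one
  simp only [hψ, one_smul, zero_smul, add_zero, one_pow, zero_pow, one_mul, zero_mul,
    mul_zero, mul_one, sub_zero, zero_div] at key
  linarith


lemma mvt_quad {H K : Type*} [NormedAddCommGroup H] [NormedSpace ℝ H]
    [NormedAddCommGroup K] [NormedSpace ℝ K]
    (F : H → K) (Gd : H → (H →L[ℝ] K)) (a v : H) (L : ℝ)
    (hG : ∀ t ∈ Icc (0:ℝ) 1, HasFDerivAt F (Gd (a + t • v)) (a + t • v))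
    (hLip : ∀ t ∈ Icc (0:ℝ) 1, ‖Gd (a + t • v) - Gd a‖ ≤ L * (t * ‖v‖)) :
    ‖F (a + v) - F a - Gd a v‖ ≤ L / 2 * ‖v‖ ^ 2 := by
  set g : ℝ → K := fun t => F (a + t • v) - F a - t • (Gd a v) with hg
  set g' : ℝ → K := fun t => Gd (a + t • v) v - Gd a v with hg'
  have hD : ∀ t ∈ Icc (0:ℝ) 1, HasDerivAt g (g' t) t := by
    intro t ht
    have h1 : HasDerivAt (fun t : ℝ => a + t • v) v t := by
      simpa using ((hasDerivAt_id t).smul_const v).const_add a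
    have h2 : HasDerivAt (fun t : ℝ => F (a + t • v)) (Gd (a + t • v) v) t :=
      (hG t ht).comp_hasDerivAt t h1
    have h3 : HasDerivAt (fun t : ℝ => t • (Gd a v)) (Gd a v) t := by
      simpa using (hasDerivAt_id t).smul_const (Gd a v)
    simpa [hg, hg', Pi.sub_def] using (h2.sub_const (F a)).sub h3
  have key : ∀ t ∈ Icc (0:ℝ) 1, ‖g t‖ ≤ L * ‖v‖ ^ 2 * t ^ 2 / 2 := by
    refine image_norm_le_of_norm_deriv_right_le_deriv_boundary
      (f' := g') (B := fun t => L * ‖v‖ ^ 2 * t ^ 2 / 2) (B' := fun t => L * ‖v‖ ^ 2 * t)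
      ?_ ?_ ?_ ?_ ?_
    · intro t ht; exact (hD t ht).continuousAt.continuousWithinAt
    · intro t ht; exact (hD t (Ico_subset_Icc_self ht)).hasDerivWithinAt
    · simp [hg]
    · intro t
      have h0 : HasDerivAt (fun s : ℝ => s ^ 2) (2 * t) t := by simpa using hasDerivAt_pow 2 t
      have := (h0.const_mul (L * ‖v‖ ^ 2)).div_const 2
      exact this.congr_deriv (by ring)
    · intro t ht
      have h6 := hLip t (Ico_subset_Icc_self ht)
      have h7 : ‖g' t‖ ≤ ‖Gd (a + t • v) - Gd a‖ * ‖v‖ := by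
        simpa [hg'] using (Gd (a + t • v) - Gd a).le_opNorm v
      have := mul_le_mul_of_nonneg_right h6 (norm_nonneg v)
      calc ‖g' t‖ ≤ L * (t * ‖v‖) * ‖v‖ := h7.trans this
        _ = L * ‖v‖ ^ 2 * t := by ring
  have h9 := key 1 (right_mem_Icc.2 zero_le_one)
  simp only [hg, one_smul, one_pow] at h9
  linarith

lemma grad_sq_bound {K : Type*} [NormedAddCommGroup K] [InnerProductSpace ℝ K] [CompleteSpace K]
    (h : K → ℝ) (gradh : K → K) (Lh hstar : ℝ) (hLh : 0 < Lh)
    (hgradh : ∀ u, HasGradientAt h (gradh u) u)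
    (hgradhLip : ∀ u v, ‖gradh u - gradh v‖ ≤ Lh * ‖u - v‖)
    (hhstar : ∀ u, hstar ≤ h u) (u : K) :
    ‖gradh u‖ ^ 2 ≤ 2 * Lh * (h u - hstar) := by
  have hd := descent_seg h gradh u (-(Lh⁻¹ • gradh u)) Lh
    (fun t _ => hgradh _)
    (fun t ht => by
      have := hgradhLip (u + t • -(Lh⁻¹ • gradh u)) u
      simp only [add_sub_cancel_left] at this
      calc ‖gradh (u + t • -(Lh⁻¹ • gradh u)) - gradh u‖
          ≤ Lh * ‖t • -(Lh⁻¹ • gradh u)‖ := this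
        _ = Lh * (t * ‖-(Lh⁻¹ • gradh u)‖) := by
            rw [norm_smul, Real.norm_eq_abs, abs_of_nonneg ht.1]
        _ ≤ Lh * (t * ‖-(Lh⁻¹ • gradh u)‖) := le_refl _)
  have h1 := hhstar (u + -(Lh⁻¹ • gradh u))
  rw [inner_neg_right, real_inner_smul_right, real_inner_self_eq_norm_sq] at hd
  have h2 : ‖-(Lh⁻¹ • gradh u)‖ ^ 2 = (Lh⁻¹) ^ 2 * ‖gradh u‖ ^ 2 := by
    rw [norm_neg, norm_smul, Real.norm_eq_abs, mul_pow, sq_abs]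
  rw [h2] at hd
  have hLh' : Lh⁻¹ * Lh = 1 := inv_mul_cancel₀ (ne_of_gt hLh)
  have h3 : hstar ≤ h u - Lh⁻¹ * ‖gradh u‖ ^ 2 + Lh / 2 * (Lh⁻¹ ^ 2 * ‖gradh u‖ ^ 2) :=
    h1.trans hd
  have h6 : Lh / 2 * (Lh⁻¹ ^ 2 * ‖gradh u‖ ^ 2) = Lh⁻¹ / 2 * ‖gradh u‖ ^ 2 := by
    field_simp
  have h7 : Lh⁻¹ / 2 * ‖gradh u‖ ^ 2 ≤ h u - hstar := by rw [h6] at h3; linarith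
  have h8 := mul_le_mul_of_nonneg_left h7 (by positivity : (0:ℝ) ≤ 2 * Lh)
  have h9 : 2 * Lh * (Lh⁻¹ / 2 * ‖gradh u‖ ^ 2) = Lh * Lh⁻¹ * ‖gradh u‖ ^ 2 := by ring
  rw [h9, mul_inv_cancel₀ hLh.ne', one_mul] at h8
  linarith



/-- `upd x i s` is `x` with its `i`-th block replaced by `s`, in the Euclidean
product space `E = ℝ^{n 0} × ⋯ × ℝ^{n (b-1)}`. -/
noncomputable def upd {b : ℕ} {n : Fin b → ℕ}
    (x : PiLp 2 (fun i => EuclideanSpace ℝ (Fin (n i)))) (i : Fin b)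
    (s : EuclideanSpace ℝ (Fin (n i))) :
    PiLp 2 (fun i => EuclideanSpace ℝ (Fin (n i))) :=
  WithLp.toLp 2 (Function.update x i s)

variable {b : ℕ} {n : Fin b → ℕ}

lemma upd_apply_same (x : PiLp 2 (fun i => EuclideanSpace ℝ (Fin (n i)))) (i : Fin b)
    (s : EuclideanSpace ℝ (Fin (n i))) : upd x i s i = s := by
  unfold upd; exact Function.update_self i s x

lemma upd_apply_ne (x : PiLp 2 (fun i => EuclideanSpace ℝ (Fin (n i)))) (i j : Fin b)
    (s : EuclideanSpace ℝ (Fin (n i))) (hj : j ≠ i) : upd x i s j = x j := by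
  unfold upd; exact Function.update_of_ne hj s x

lemma upd_self (x : PiLp 2 (fun i => EuclideanSpace ℝ (Fin (n i)))) (i : Fin b) :
    upd x i (x i) = x := by
  unfold upd; exact congrArg (WithLp.toLp 2) (Function.update_eq_self i x)

lemma upd_upd (x : PiLp 2 (fun i => EuclideanSpace ℝ (Fin (n i)))) (i : Fin b)
    (s t : EuclideanSpace ℝ (Fin (n i))) : upd (upd x i s) i t = upd x i t := by
  unfold upd
  have h := Function.update_self i s x
  refine congrArg (WithLp.toLp 2) ?_
  calc Function.update (Function.update x i s) i t
      = Function.update x i t := Function.update_idem _ _ _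

lemma norm_upd_sub (x : PiLp 2 (fun i => EuclideanSpace ℝ (Fin (n i)))) (i : Fin b)
    (s t : EuclideanSpace ℝ (Fin (n i))) : ‖upd x i s - upd x i t‖ = ‖s - t‖ := by
  have h1 : ‖upd x i s - upd x i t‖ ^ 2 = ∑ j, ‖(upd x i s - upd x i t) j‖ ^ 2 :=
    PiLp.norm_sq_eq_of_L2 _ _
  have h2 : ∀ j, ‖(upd x i s - upd x i t) j‖ ^ 2 = if j = i then ‖s - t‖ ^ 2 else 0 := by
    intro j
    rw [PiLp.sub_apply]
    by_cases hj : j = i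
    · subst hj; simp [upd_apply_same]
    · simp [upd_apply_ne _ _ _ _ hj, hj]
  rw [Finset.sum_congr rfl (fun j _ => h2 j), Finset.sum_ite_eq' Finset.univ i] at h1
  simp only [Finset.mem_univ, if_true] at h1
  have := sq_abs ‖upd x i s - upd x i t‖
  nlinarith [norm_nonneg (upd x i s - upd x i t), norm_nonneg (s - t)]

lemma upd_comb (x : PiLp 2 (fun i => EuclideanSpace ℝ (Fin (n i)))) (i : Fin b)
    (s : EuclideanSpace ℝ (Fin (n i))) (θ : ℝ) :
    upd x i (x i + θ • (s - x i)) = x + θ • (upd x i s - x) := by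
  refine PiLp.ext (fun j => ?_)
  rw [PiLp.add_apply, PiLp.smul_apply, PiLp.sub_apply]
  by_cases hj : j = i
  · subst hj; rw [upd_apply_same, upd_apply_same]
  · rw [upd_apply_ne _ _ _ _ hj, upd_apply_ne _ _ _ _ hj]
    simp


lemma arith_final {S W B q : ℝ} (hS0 : 0 ≤ S) (hq0 : 0 ≤ q) (hSW : S ≤ W) (hWB : W ≤ B)
    (hq : S ^ 2 + 2 * B * q ≤ W ^ 2) (hB : 0 < B) : S + q / 2 ≤ B := by
  have hW0 : 0 ≤ W := hS0.trans hSW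
  nlinarith [mul_nonneg (sub_nonneg.2 hSW) (by linarith : (0:ℝ) ≤ 2 * B - (S + W) / 2),
    mul_nonneg (sub_nonneg.2 hWB) hW0]


/-- sufficient decrease, Lemma 3.1: under the step-size condition
`β ≥ L^f_i + L^F_i √(2L_h) √(φ(x) − φ^*)`, at a global minimizer `sp` of the
regularized block model, with `x₊ = x[i ↦ sp]`,
`φ(x₊) ≤ φ(x) − (β/2)‖x₊ − x‖²`. -/
theorem sufficient_decrease
    {b m : ℕ} (hb : 0 < b) (hm : 0 < m) {n : Fin b → ℕ} (hn : ∀ i, 0 < n i)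
    (f : PiLp 2 (fun i => EuclideanSpace ℝ (Fin (n i))) → ℝ)
    (hf : Differentiable ℝ f)
    (F : PiLp 2 (fun i => EuclideanSpace ℝ (Fin (n i))) → EuclideanSpace ℝ (Fin m))
    (hF : Differentiable ℝ F)
    (h : EuclideanSpace ℝ (Fin m) → ℝ)
    (hhconv : ConvexOn ℝ Set.univ h) (hhdiff : Differentiable ℝ h)
    (Lh : ℝ) (hLh : 0 < Lh)
    (gradh : EuclideanSpace ℝ (Fin m) → EuclideanSpace ℝ (Fin m))
    (hgradh : ∀ u, HasGradientAt h (gradh u) u)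
    (hgradhLip : ∀ u v, ‖gradh u - gradh v‖ ≤ Lh * ‖u - v‖)
    (g : (i : Fin b) → EuclideanSpace ℝ (Fin (n i)) → ℝ)
    (hg : ∀ i, ConvexOn ℝ Set.univ (g i))
    -- lower bounds `f ≥ f^*`, `h ≥ h^*`, `Σᵢ gᵢ ≥ g^*`; `φ^* = f^* + h^* + g^*`
    (fstar hstar gstar : ℝ)
    (hfstar : ∀ y, fstar ≤ f y) (hhstar : ∀ u, hstar ≤ h u)
    (hgstar : ∀ y : PiLp 2 (fun i => EuclideanSpace ℝ (Fin (n i))), gstar ≤ ∑ j, g j (y j))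
    (x : PiLp 2 (fun i => EuclideanSpace ℝ (Fin (n i)))) (i : Fin b)
    (β Lf LF : ℝ) (hβ : 0 < β) (hLF : 0 < LF) (hβLf : Lf < β)
    -- `gif y = ∇_i f(y)`, the gradient at `y^i` of `s ↦ f(y[i ↦ s])`
    (gif : PiLp 2 (fun i => EuclideanSpace ℝ (Fin (n i))) → EuclideanSpace ℝ (Fin (n i)))
    (hgif : ∀ y, HasGradientAt (fun s => f (upd y i s)) (gif y) (y i))
    -- `GiF y = ∇_i F(y)`, the Fréchet derivative at `y^i` of `s ↦ F(y[i ↦ s])`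
    (GiF : PiLp 2 (fun i => EuclideanSpace ℝ (Fin (n i))) →
      (EuclideanSpace ℝ (Fin (n i)) →L[ℝ] EuclideanSpace ℝ (Fin m)))
    (hGiF : ∀ y, HasFDerivAt (fun s => F (upd y i s)) (GiF y) (y i))
    -- step-size condition `β ≥ L^f_i + L^F_i √(2 L_h) √(φ(x) − φ^*)`
    (hβcond : Lf + LF * Real.sqrt (2 * Lh) *
        Real.sqrt ((f x + h (F x) + ∑ j, g j (x j)) - (fstar + hstar + gstar)) ≤ β)
    -- `sp` is a global minimizer of `q_β(s) = φ̄^i(s;x) + (β/2)‖s − x^i‖²`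
    (sp : EuclideanSpace ℝ (Fin (n i)))
    (hmin : ∀ t,
      (f x + ⟪gif x, sp - x i⟫ + h (F x + GiF x (sp - x i)) + g i sp)
          + β / 2 * ‖sp - x i‖ ^ 2
        ≤ (f x + ⟪gif x, t - x i⟫ + h (F x + GiF x (t - x i)) + g i t)
          + β / 2 * ‖t - x i‖ ^ 2)
    -- `C` is a convex set containing `x` and `x₊ = x[i ↦ sp]`, on which the block
    -- gradients of `f` and `F` are Lipschitz
    (C : Set (PiLp 2 (fun i => EuclideanSpace ℝ (Fin (n i)))))
    (hC : Convex ℝ C) (hxC : x ∈ C) (hxpC : upd x i sp ∈ C)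
    (hgifLip : ∀ y ∈ C, ∀ z ∈ C, ‖gif y - gif z‖ ≤ Lf * ‖y - z‖)
    (hGiFLip : ∀ y ∈ C, ∀ z ∈ C, ‖GiF y - GiF z‖ ≤ LF * ‖y - z‖) :
    f (upd x i sp) + h (F (upd x i sp)) + ∑ j, g j (upd x i sp j)
      ≤ (f x + h (F x) + ∑ j, g j (x j)) - β / 2 * ‖upd x i sp - x‖ ^ 2 := by
  by_cases hsp : sp = x i
  · rw [hsp, upd_self]
    simp
  -- main case
  have hnormxp : ‖upd x i sp - x‖ = ‖sp - x i‖ := by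
    have := norm_upd_sub x i sp (x i)
    rwa [upd_self] at this
  set d : EuclideanSpace ℝ (Fin (n i)) := sp - x i with hd
  clear_value d
  set K : ℝ := ‖d‖ ^ 2 with hKdef
  clear_value K
  have hdne : d ≠ 0 := by rw [hd]; exact sub_ne_zero.mpr hsp
  have hK : 0 < K := by rw [hKdef]; exact pow_pos (norm_pos_iff.mpr hdne) 2
  have hxp_ne : upd x i sp ≠ x := by
    intro hh
    exact hsp (by rw [← upd_apply_same x i sp, hh])
  have hLf0 : 0 ≤ Lf := by
    have h1 := hgifLip x hxC (upd x i sp) hxpC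
    have h2 : 0 < ‖x - upd x i sp‖ := by
      rw [norm_sub_rev, hnormxp]
      exact norm_pos_iff.mpr hdne
    have h3 : 0 * ‖x - upd x i sp‖ ≤ Lf * ‖x - upd x i sp‖ := by
      rw [zero_mul]; exact (norm_nonneg _).trans h1
    exact le_of_mul_le_mul_right h3 h2
  -- membership of the segment in C
  have hseg : ∀ t ∈ Set.Icc (0:ℝ) 1, upd x i (x i + t • d) ∈ C := by
    intro t ht
    rw [hd, upd_comb]
    have hcomb : x + t • (upd x i sp - x) = (1 - t) • x + t • (upd x i sp) := by module
    rw [hcomb]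
    exact hC hxC hxpC (by linarith [ht.2]) ht.1 (by ring)
  have hspd : x i + d = sp := by rw [hd]; abel
  -- descent lemma for f along the block segment
  have hfd : f (upd x i sp) ≤ f x + ⟪gif x, d⟫ + Lf / 2 * K := by
    have := descent_seg (fun s => f (upd x i s)) (fun s => gif (upd x i s)) (x i) d Lf
      (by
        intro t ht
        have hh := hgif (upd x i (x i + t • d))
        rw [upd_apply_same] at hh
        simp only [upd_upd] at hh
        exact hh)
      (by
        intro t ht
        have h1 := hgifLip _ (hseg t ht) (upd x i (x i)) (by rw [upd_self]; exact hxC)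
        rw [norm_upd_sub] at h1
        calc ‖gif (upd x i (x i + t • d)) - gif (upd x i (x i))‖
            ≤ Lf * ‖x i + t • d - x i‖ := h1
          _ = Lf * (t * ‖d‖) := by
              rw [add_sub_cancel_left, norm_smul, Real.norm_eq_abs, abs_of_nonneg ht.1])
    rw [hspd] at this
    simp only [upd_self] at this
    rw [← hKdef] at this
    exact this
  -- quadratic bound for F along the block segment
  have hFd : ‖F (upd x i sp) - F x - GiF x d‖ ≤ LF / 2 * K := by
    have := mvt_quad (fun s => F (upd x i s)) (fun s => GiF (upd x i s)) (x i) d LF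
      (by
        intro t ht
        have hh := hGiF (upd x i (x i + t • d))
        rw [upd_apply_same] at hh
        simp only [upd_upd] at hh
        exact hh)
      (by
        intro t ht
        have h1 := hGiFLip _ (hseg t ht) (upd x i (x i)) (by rw [upd_self]; exact hxC)
        rw [norm_upd_sub] at h1
        calc ‖GiF (upd x i (x i + t • d)) - GiF (upd x i (x i))‖
            ≤ LF * ‖x i + t • d - x i‖ := h1
          _ = LF * (t * ‖d‖) := by
              rw [add_sub_cancel_left, norm_smul, Real.norm_eq_abs, abs_of_nonneg ht.1])
    rw [hspd] at this
    simp only [upd_self] at this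
    rw [← hKdef] at this
    exact this
  set l : EuclideanSpace ℝ (Fin m) := F x + GiF x d with hl
  clear_value l
  set e : EuclideanSpace ℝ (Fin m) := F (upd x i sp) - l with he
  clear_value e
  have hee : ‖e‖ ≤ LF / 2 * K := by
    have heq : e = F (upd x i sp) - F x - GiF x d := by rw [he, hl]; abel
    rw [heq]; exact hFd
  -- descent lemma for h
  have hhd : h (F (upd x i sp)) ≤ h l + ⟪gradh l, e⟫ + Lh / 2 * ‖e‖ ^ 2 := by
    have := descent_seg h gradh l e Lh (fun t _ => hgradh _)
      (by
        intro t ht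
        have h1 := hgradhLip (l + t • e) l
        rw [add_sub_cancel_left] at h1
        calc ‖gradh (l + t • e) - gradh l‖ ≤ Lh * ‖t • e‖ := h1
          _ = Lh * (t * ‖e‖) := by
              rw [norm_smul, Real.norm_eq_abs, abs_of_nonneg ht.1])
    have hle : l + e = F (upd x i sp) := by rw [he]; abel
    rwa [hle] at this
  -- strong minimality: model decrease β (not β/2)
  have hsm : f x + ⟪gif x, d⟫ + h l + g i sp
      ≤ (f x + h (F x) + g i (x i)) - β * K := by
    have claim : ∀ θ : ℝ, 0 < θ → θ ≤ 1 →
        f x + ⟪gif x, d⟫ + h l + g i sp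
          ≤ (f x + h (F x) + g i (x i)) - β * K + β / 2 * θ * K := by
      intro θ hθ0 hθ1
      set A : EuclideanSpace ℝ (Fin (n i)) := sp + θ • (x i - sp) with hA
      have hAd : A - x i = (1 - θ) • d := by rw [hA, hd]; module
      have hinner : ⟪gif x, A - x i⟫ = (1 - θ) * ⟪gif x, d⟫ := by
        rw [hAd, real_inner_smul_right]
      have hFA : F x + GiF x (A - x i) = (1 - θ) • l + θ • (F x) := by
        rw [hAd, map_smul, hl]; module
      have hhA : h (F x + GiF x (A - x i)) ≤ (1 - θ) * h l + θ * h (F x) := by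
        rw [hFA]
        exact hhconv.2 (Set.mem_univ l) (Set.mem_univ (F x)) (by linarith) hθ0.le (by ring)
      have hgA : g i A ≤ (1 - θ) * g i sp + θ * g i (x i) := by
        have hAc : A = (1 - θ) • sp + θ • (x i) := by rw [hA]; module
        rw [hAc]
        exact (hg i).2 (Set.mem_univ sp) (Set.mem_univ (x i)) (by linarith) hθ0.le (by ring)
      have hnA : ‖A - x i‖ ^ 2 = (1 - θ) ^ 2 * K := by
        rw [hAd, norm_smul, Real.norm_eq_abs, mul_pow, sq_abs, hKdef]
      have hm1 := hmin A
      rw [hinner, hnA] at hm1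
      have hm2 : (f x + ⟪gif x, d⟫ + h l + g i sp) + β / 2 * K
          ≤ f x + (1 - θ) * ⟪gif x, d⟫ + ((1 - θ) * h l + θ * h (F x))
            + ((1 - θ) * g i sp + θ * g i (x i)) + β / 2 * ((1 - θ) ^ 2 * K) := by
        exact hm1.trans (by linarith only [hhA, hgA])
      have key : θ * (⟪gif x, d⟫ + h l + g i sp)
          ≤ θ * (h (F x) + g i (x i) + β / 2 * (θ - 2) * K) := by
        ring_nf
        ring_nf at hm2
        linarith only [hm2]
      have key2 := (mul_le_mul_iff_right₀ hθ0).mp key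
      linarith only [key2]
    refine le_of_forall_pos_le_add ?_
    intro ε hε
    have hden : (0:ℝ) < β * K + 1 := by positivity
    set θ : ℝ := min (1/2) (ε / (β * K + 1)) with hθ
    clear_value θ
    have hθ0 : 0 < θ := by rw [hθ]; exact lt_min (by norm_num) (div_pos hε hden)
    have hθ1 : θ ≤ 1 := by rw [hθ]; exact (min_le_left _ _).trans (by norm_num)
    have hc := claim θ hθ0 hθ1
    have hθle : θ ≤ ε / (β * K + 1) := by rw [hθ]; exact min_le_right _ _
    have hθ2 : θ * (β * K + 1) ≤ ε := by
      calc θ * (β * K + 1) ≤ ε / (β * K + 1) * (β * K + 1) :=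
            mul_le_mul_of_nonneg_right hθle hden.le
        _ = ε := div_mul_cancel₀ ε hden.ne'
    have hθ3 : β / 2 * θ * K ≤ ε := by
      linarith only [hθ2, mul_nonneg (mul_nonneg hβ.le hθ0.le) hK.le, hθ0.le]
    linarith only [hc, hθ3]
  -- sums of the g's
  have hsumx : ∑ j, g j (x j) = g i (x i) + ∑ j ∈ Finset.univ.erase i, g j (x j) :=
    (Finset.add_sum_erase _ _ (Finset.mem_univ i)).symm
  set Rg : ℝ := ∑ j ∈ Finset.univ.erase i, g j (x j) with hRg
  clear_value Rg
  have hsumxp : ∑ j, g j (upd x i sp j) = g i sp + Rg := by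
    rw [hRg, ← Finset.add_sum_erase _ (fun j => g j (upd x i sp j)) (Finset.mem_univ i),
      upd_apply_same]
    congr 1
    apply Finset.sum_congr rfl
    intro j hj
    rw [upd_apply_ne x i j sp (Finset.ne_of_mem_erase hj)]
  have hgsp : gstar - Rg ≤ g i sp := by
    have h5 := hgstar (upd x i sp)
    rw [hsumxp] at h5
    linarith only [h5]
  -- the quantities D and A'
  set D : ℝ := (f x + h (F x) + ∑ j, g j (x j)) - (fstar + hstar + gstar) with hDdef
  clear_value D
  have hD0 : 0 ≤ D := by
    rw [hDdef]
    linarith only [hfstar x, hhstar (F x), hgstar x]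
  set A' : ℝ := h l - hstar with hA'
  clear_value A'
  have hA0 : 0 ≤ A' := by rw [hA']; linarith only [hhstar l]
  have hipl : fstar - f x - Lf / 2 * K ≤ ⟪gif x, d⟫ := by
    linarith only [hfstar (upd x i sp), hfd]
  have hAle : A' ≤ D - (β - Lf) * K := by
    have h1 : h l ≤ h (F x) + g i (x i) - g i sp - ⟪gif x, d⟫ - β * K := by
      linarith only [hsm]
    rw [hA', hDdef, hsumx]
    linarith only [h1, hgsp, hipl, mul_nonneg hLf0 hK.le]
  -- gradient-norm bound at l
  have hgl : ‖gradh l‖ ≤ Real.sqrt (2 * Lh * A') := by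
    have h1 := grad_sq_bound h gradh Lh hstar hLh hgradh hgradhLip hhstar l
    have h2 : ‖gradh l‖ ^ 2 ≤ 2 * Lh * A' := by rw [hA']; linarith only [h1]
    have h3 := Real.sqrt_le_sqrt h2
    rwa [Real.sqrt_sq (norm_nonneg _)] at h3
  set s : ℝ := Real.sqrt (2 * Lh * A') with hs
  clear_value s
  have hinner_e : ⟪gradh l, e⟫ ≤ s * (LF / 2 * K) := by
    have h4 : ⟪gradh l, e⟫ ≤ ‖gradh l‖ * ‖e‖ := real_inner_le_norm _ _
    have hs0' : 0 ≤ Real.sqrt (2 * Lh * A') := Real.sqrt_nonneg _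
    rw [hs]
    exact h4.trans (mul_le_mul (by rw [← hs]; exact hgl) hee (norm_nonneg e)
      (by rw [← hs] at hs0' ⊢; exact hs0'))
  set w : ℝ := Real.sqrt (2 * Lh * D) with hw
  clear_value w
  have hs0 : 0 ≤ s := by rw [hs]; exact Real.sqrt_nonneg _
  have hw0 : 0 ≤ w := by rw [hw]; exact Real.sqrt_nonneg _
  have hs2 : s ^ 2 = 2 * Lh * A' := by rw [hs]; exact Real.sq_sqrt (by positivity)
  have hw2 : w ^ 2 = 2 * Lh * D := by rw [hw]; exact Real.sq_sqrt (by positivity)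
  have hBK0 : 0 ≤ (β - Lf) * K := mul_nonneg (by linarith only [hβLf]) hK.le
  have hAD : A' ≤ D := by linarith only [hAle, hBK0]
  have hsw : s ≤ w := by
    rw [hs, hw]
    exact Real.sqrt_le_sqrt (by linarith only
      [mul_le_mul_of_nonneg_left hAD (by positivity : (0:ℝ) ≤ 2 * Lh)])
  have hwB : LF * w ≤ β - Lf := by
    have h1 : w = Real.sqrt (2 * Lh) * Real.sqrt D := by
      rw [hw]; exact Real.sqrt_mul (by positivity) D
    rw [h1, ← mul_assoc]
    linarith only [hβcond]
  have hs2' : (LF * s) ^ 2 = 2 * Lh * LF ^ 2 * A' := by rw [mul_pow, hs2]; ring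
  have hw2' : (LF * w) ^ 2 = 2 * Lh * LF ^ 2 * D := by rw [mul_pow, hw2]; ring
  have hq : (LF * s) ^ 2 + 2 * (β - Lf) * (Lh * LF ^ 2 * K) ≤ (LF * w) ^ 2 := by
    have h6 := mul_le_mul_of_nonneg_left hAle (by positivity : (0:ℝ) ≤ 2 * Lh * LF ^ 2)
    linarith only [h6, hs2', hw2']
  have hSW : LF * s ≤ LF * w := mul_le_mul_of_nonneg_left hsw hLF.le
  have hfin : LF * s + Lh * LF ^ 2 * K / 2 ≤ β - Lf :=
    arith_final (mul_nonneg hLF.le hs0) (by positivity) hSW hwB hq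
      (by linarith only [hβLf])
  have harith : Lf / 2 * K + s * (LF / 2 * K) + Lh / 2 * (LF / 2 * K) ^ 2 ≤ β / 2 * K := by
    have h1 := mul_le_mul_of_nonneg_right hfin (by positivity : (0:ℝ) ≤ K / 2)
    have h2 : (0:ℝ) ≤ Lh * LF ^ 2 * K ^ 2 := by positivity
    linarith only [h1, h2]
  -- final assembly
  have hfinal : h (F (upd x i sp)) ≤ h l + s * (LF / 2 * K) + Lh / 2 * (LF / 2 * K) ^ 2 := by
    have h3 := mul_self_le_mul_self (norm_nonneg e) hee
    have h4 : (0:ℝ) ≤ Lh / 2 := by positivity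
    have h5 := mul_le_mul_of_nonneg_left h3 h4
    linarith only [hhd, hinner_e, h5]
  rw [hsumxp, hsumx, hnormxp, ← hKdef]
  linarith only [hfd, hfinal, hsm, harith]
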